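/- Average-case Gaussian rate bound: Let f(x) = exp(−πx²) be the Gaussian, extended multiplicatively to ℝ², and let r₀ := √(ln 4/π). For any prime q and any r with r₀ < r < q/r₀, letting μ_{r,r} := E_{e←D_r}[f_r(e)] for the Gaussian channel D_r (either the continuous distribution on ℝ with density f_r(x)/r, or the discrete distribution on ℤ with mass f_r(x)/f_r(ℤ)), it holds that A^(2)_{q,r}(r)² := μ_{r,r}²/f_r(L_q) > (1/(r√2))·E_q(r)², where L_q := ∪_{z∈ℤ}((z,z) + qℤ²), E(x) := 1 − 2exp(−πx²/2), and E_q(r) := √(E(q/r)·E(r)). -/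

import Mathlib

noncomputable section

/-- The Gaussian function `f(x) = exp(-πx²)`. -/
def gauss (x : ℝ) : ℝ := Real.exp (-(Real.pi * x ^ 2))

/-- The lattice `L_q = ∪_{z∈ℤ} ((z,z) + qℤ²) ⊂ ℝ²`. -/
def LqSet (q : ℕ) : Set (ℝ × ℝ) :=
  {v | ∃ z w₁ w₂ : ℤ, v.1 = z + q * w₁ ∧ v.2 = z + q * w₂}

/-- `f_s(L_q)`: the sum over `L_q` of the multiplicative extension of `f` to `ℝ²`,
scaled by `s` (i.e. `f_s(x) = f(x/s)`). -/
def fsLq (f : ℝ → ℝ) (s : ℝ) (q : ℕ) : ℝ :=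
  ∑' v : LqSet q, f ((v : ℝ × ℝ).1 / s) * f ((v : ℝ × ℝ).2 / s)

/-- `r₀ = √(ln 4/π)`. -/
def r₀ : ℝ := Real.sqrt (Real.log 4 / Real.pi)

/-- The "fudge factor" `E(x) = 1 − 2exp(−πx²/2)`. -/
def Eg (x : ℝ) : ℝ := 1 - 2 * Real.exp (-(Real.pi * x ^ 2) / 2)

/-- `E_q(r) = √(E(q/r)·E(r))`. -/
def Egq (q : ℕ) (r : ℝ) : ℝ := Real.sqrt (Eg (q / r) * Eg r)

open Real

private lemma r0_pos : 0 < r₀ :=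
  Real.sqrt_pos.mpr (div_pos (Real.log_pos (by norm_num)) Real.pi_pos)

private lemma exp_lt_half {x : ℝ} (hx : r₀ < x) : rexp (-(π * x ^ 2) / 2) < 1 / 2 := by
  have h4 : Real.log 4 = 2 * Real.log 2 := by
    rw [show (4 : ℝ) = 2 ^ 2 by norm_num, Real.log_pow]; push_cast; ring
  have hr0 := r0_pos
  have hx2 : r₀ ^ 2 < x ^ 2 := by nlinarith
  have hsq : r₀ ^ 2 = Real.log 4 / π :=
    Real.sq_sqrt (div_nonneg (Real.log_nonneg (by norm_num)) Real.pi_pos.le)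
  have hπ := Real.pi_pos
  have hlog : Real.log 2 < π * x ^ 2 / 2 := by
    have h5 : π * r₀ ^ 2 = Real.log 4 := by rw [hsq]; field_simp
    nlinarith
  have h6 : rexp (-(π * x ^ 2) / 2) < rexp (-Real.log 2) :=
    Real.exp_lt_exp.mpr (by linarith)
  rwa [Real.exp_neg, Real.exp_log (by norm_num : (0:ℝ) < 2), ← one_div] at h6

private lemma summable_exp_nat {c : ℝ} (hc : 0 < c) :
    Summable fun n : ℕ => rexp (-c * (n : ℝ) ^ 2) := by
  have hgeo : Summable fun n : ℕ => rexp (-c) ^ n :=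
    summable_geometric_of_lt_one (exp_pos _).le (exp_lt_one_iff.mpr (by linarith))
  refine hgeo.of_nonneg_of_le (fun n => (exp_pos _).le) (fun n => ?_)
  rw [← Real.exp_nat_mul]
  apply Real.exp_le_exp.mpr
  have h1 : (n : ℝ) ≤ (n : ℝ) ^ 2 := by exact_mod_cast Nat.le_self_pow two_ne_zero n
  nlinarith [hc.le]

private lemma summable_exp_int {c : ℝ} (hc : 0 < c) :
    Summable fun n : ℤ => rexp (-c * (n : ℝ) ^ 2) := by
  refine Summable.of_nat_of_neg ?_ ?_ <;> simpa using summable_exp_nat hc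

private lemma summable_exp_shift {c : ℝ} (hc : 0 < c) (x : ℝ) :
    Summable fun n : ℤ => rexp (-c * ((n : ℝ) + x) ^ 2) := by
  refine ((summable_exp_int (c := c / 2) (by linarith)).mul_left
    (rexp (c * x ^ 2))).of_nonneg_of_le (fun n => (exp_pos _).le) (fun n => ?_)
  rw [← Real.exp_add]
  apply Real.exp_le_exp.mpr
  nlinarith [sq_nonneg ((n : ℝ) + 2 * x), hc.le]

private lemma theta_lt {s : ℝ} (hs : 0 < s) (h : rexp (-s) < 1 / 2) :
    ∑' k : ℤ, rexp (-s * (k : ℝ) ^ 2) < 1 / (1 - 2 * rexp (-s)) := by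
  have hnat : Summable fun n : ℕ => rexp (-s * ((n : ℤ) : ℝ) ^ 2) := by
    simpa using summable_exp_nat hs
  have hneg : Summable fun n : ℕ => rexp (-s * ((-((n : ℤ) + 1) : ℤ) : ℝ) ^ 2) := by
    have hinj : Function.Injective (fun n : ℕ => -((n : ℤ) + 1)) := by
      intro a b hab; simpa using hab
    exact ((summable_exp_int hs).comp_injective hinj)
  set t := rexp (-s) with ht
  have htpos : 0 < t := exp_pos _
  have h1t : 0 < 1 - t := by linarith
  have h12t : 0 < 1 - 2 * t := by linarith
  have htail : Summable fun n : ℕ => rexp (-s * ((n : ℝ) + 1) ^ 2) :=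
    hneg.congr fun n => by push_cast; ring_nf
  have hsplit : ∑' k : ℤ, rexp (-s * (k : ℝ) ^ 2)
      = (1 + ∑' n : ℕ, rexp (-s * ((n : ℝ) + 1) ^ 2))
        + ∑' n : ℕ, rexp (-s * ((n : ℝ) + 1) ^ 2) := by
    rw [tsum_of_nat_of_neg_add_one (f := fun k : ℤ => rexp (-s * (k : ℝ) ^ 2)) hnat hneg]
    congr 1
    · rw [Summable.tsum_eq_zero_add hnat]
      congr 1
      · norm_num
      · exact tsum_congr fun n => by push_cast; ring_nf
    · exact tsum_congr fun n => by push_cast; ring_nf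
  have hg2 : Summable fun n : ℕ => t ^ (n + 1) := by
    simpa [pow_succ'] using
      (summable_geometric_of_lt_one htpos.le (by linarith : t < 1)).mul_left t
  have hgsum : (∑' n : ℕ, t ^ (n + 1)) = t * (1 - t)⁻¹ := by
    have : (fun n : ℕ => t ^ (n + 1)) = fun n : ℕ => t * t ^ n := funext fun n => pow_succ' t n
    rw [this, tsum_mul_left, tsum_geometric_of_lt_one htpos.le (by linarith : t < 1)]
  have hle1 : (∑' n : ℕ, rexp (-s * ((n : ℝ) + 1) ^ 2)) ≤ t * (1 - t)⁻¹ := by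
    rw [← hgsum]
    refine Summable.tsum_le_tsum (fun n => ?_) htail hg2
    rw [ht, ← Real.exp_nat_mul]
    apply Real.exp_le_exp.mpr
    push_cast
    nlinarith [mul_nonneg hs.le (by positivity : (0:ℝ) ≤ (n : ℝ) ^ 2 + n)]
  have hGpos : 0 < t * (1 - t)⁻¹ := by positivity
  have hGt : (t * (1 - t)⁻¹) * (1 - t) = t := by field_simp
  rw [hsplit, lt_div_iff₀ h12t]
  nlinarith [mul_pos hGpos htpos]

private lemma poisson' {c : ℝ} (hc : 0 < c) :
    ∑' n : ℤ, rexp (-(π / c) * (n : ℝ) ^ 2)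
      = Real.sqrt c * ∑' n : ℤ, rexp (-(π * c) * (n : ℝ) ^ 2) := by
  have h := Real.tsum_exp_neg_mul_int_sq (a := 1 / c) (by positivity)
  have e1 : -π * (1 / c) = -(π / c) := by ring
  have e2 : -π / (1 / c) = -(π * c) := by field_simp
  have e3 : (1 : ℝ) / (1 / c) ^ ((1 : ℝ) / 2) = Real.sqrt c := by
    rw [← Real.sqrt_eq_rpow, one_div c, Real.sqrt_inv]
    field_simp
  rw [e1, e2, e3] at h
  exact h

private lemma shifted_le {c : ℝ} (hc : 0 < c) (x : ℝ) :
    ∑' n : ℤ, rexp (-(π / c) * ((n : ℝ) + x) ^ 2)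
      ≤ Real.sqrt c * ∑' n : ℤ, rexp (-(π * c) * (n : ℝ) ^ 2) := by
  have hcC : (0 : ℝ) < ((c : ℂ)).re := by simpa using hc
  have key := Complex.tsum_exp_neg_quadratic hcC (-(Complex.I) * (x : ℂ))
  have hz : ∀ n : ℤ, (-(π : ℂ) * (c : ℂ) * (n : ℂ) ^ 2 + 2 * (π : ℂ) * (-(Complex.I) * (x : ℂ)) * (n : ℂ))
      = ((-(π * c) * (n : ℝ) ^ 2 : ℝ) : ℂ) + ((-(2 * π * x * (n : ℝ)) : ℝ) : ℂ) * Complex.I := by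
    intro n; push_cast; ring
  have hre : ∀ n : ℤ, (Complex.exp (-(π : ℂ) * (c : ℂ) * (n : ℂ) ^ 2
      + 2 * (π : ℂ) * (-(Complex.I) * (x : ℂ)) * (n : ℂ))).re
      = rexp (-(π * c) * (n : ℝ) ^ 2) * Real.cos (-(2 * π * x * (n : ℝ))) := by
    intro n
    rw [hz n, Complex.exp_re]
    simp only [Complex.add_re, Complex.add_im, Complex.ofReal_re, Complex.ofReal_im,
      Complex.mul_re, Complex.mul_im, Complex.I_re, Complex.I_im, mul_zero, mul_one,
      zero_mul, sub_zero, zero_add, add_zero]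
  have hnorm : ∀ n : ℤ, ‖Complex.exp (-(π : ℂ) * (c : ℂ) * (n : ℂ) ^ 2
      + 2 * (π : ℂ) * (-(Complex.I) * (x : ℂ)) * (n : ℂ))‖ = rexp (-(π * c) * (n : ℝ) ^ 2) := by
    intro n
    rw [Complex.norm_exp, hz n]
    simp only [Complex.add_re, Complex.ofReal_re, Complex.mul_re, Complex.ofReal_im,
      Complex.I_re, Complex.I_im, mul_zero, mul_one, zero_mul, sub_zero, zero_add, add_zero]
  have hT : Summable fun n : ℤ => Complex.exp (-(π : ℂ) * (c : ℂ) * (n : ℂ) ^ 2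
      + 2 * (π : ℂ) * (-(Complex.I) * (x : ℂ)) * (n : ℂ)) := by
    apply Summable.of_norm
    simp only [hnorm]
    exact summable_exp_int (by positivity)
  have hrhs : ∀ n : ℤ, Complex.exp (-(π : ℂ) / (c : ℂ) * ((n : ℂ) + Complex.I * (-(Complex.I) * (x : ℂ))) ^ 2)
      = ((rexp (-(π / c) * ((n : ℝ) + x) ^ 2) : ℝ) : ℂ) := by
    intro n
    rw [Complex.ofReal_exp]
    congr 1
    have hI : Complex.I * (-(Complex.I) * (x : ℂ)) = (x : ℂ) := by
      rw [← mul_assoc, mul_neg, Complex.I_mul_I, neg_neg, one_mul]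
    rw [hI]
    push_cast
    ring
  have hcpow : ((c : ℂ)) ^ ((1 : ℂ) / 2) = ((Real.sqrt c : ℝ) : ℂ) := by
    rw [show ((1 : ℂ) / 2) = (((1 : ℝ) / 2 : ℝ) : ℂ) by norm_num,
      ← Complex.ofReal_cpow hc.le, ← Real.sqrt_eq_rpow]
  have hcpow_ne : ((c : ℂ)) ^ ((1 : ℂ) / 2) ≠ 0 := by
    rw [hcpow]
    simpa using (Real.sqrt_ne_zero'.mpr hc)
  have key2 : ((∑' n : ℤ, rexp (-(π / c) * ((n : ℝ) + x) ^ 2) : ℝ) : ℂ)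
      = ((Real.sqrt c : ℝ) : ℂ) * ∑' n : ℤ, Complex.exp (-(π : ℂ) * (c : ℂ) * (n : ℂ) ^ 2
        + 2 * (π : ℂ) * (-(Complex.I) * (x : ℂ)) * (n : ℂ)) := by
    have h2 : (∑' n : ℤ, Complex.exp (-(π : ℂ) / (c : ℂ)
        * ((n : ℂ) + Complex.I * (-(Complex.I) * (x : ℂ))) ^ 2))
        = ((∑' n : ℤ, rexp (-(π / c) * ((n : ℝ) + x) ^ 2) : ℝ) : ℂ) := by
      rw [Complex.ofReal_tsum]
      exact tsum_congr hrhs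
    rw [h2] at key
    rw [key, ← hcpow, ← mul_assoc, mul_one_div, div_self hcpow_ne, one_mul]
  have hS : (∑' n : ℤ, rexp (-(π / c) * ((n : ℝ) + x) ^ 2))
      = Real.sqrt c * ∑' n : ℤ, rexp (-(π * c) * (n : ℝ) ^ 2) * Real.cos (-(2 * π * x * (n : ℝ))) := by
    have := congrArg Complex.re key2
    rw [Complex.ofReal_re, Complex.re_ofReal_mul, Complex.re_tsum hT] at this
    simpa only [hre] using this
  rw [hS]
  apply mul_le_mul_of_nonneg_left _ (Real.sqrt_nonneg c)
  refine Summable.tsum_le_tsum (fun n => ?_) ?_ (summable_exp_int (by positivity))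
  · exact mul_le_of_le_one_right (exp_pos _).le (Real.cos_le_one _)
  · have := (Complex.hasSum_re hT.hasSum).summable
    simpa only [hre] using this

private def lqMap (q : ℕ) (p : ℤ × ℤ) : LqSet q :=
  ⟨((p.2 : ℝ), (p.2 : ℝ) + q * p.1), ⟨p.2, 0, p.1, by push_cast; ring, by push_cast; ring⟩⟩

private lemma lqMap_bijective {q : ℕ} (hq : 0 < q) : Function.Bijective (lqMap q) := by
  constructor
  · rintro ⟨m₁, a₁⟩ ⟨m₂, a₂⟩ h
    have h1 : ((a₁ : ℝ), (a₁ : ℝ) + q * m₁) = ((a₂ : ℝ), (a₂ : ℝ) + q * m₂) :=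
      congrArg Subtype.val h
    have h2 : (a₁ : ℝ) = a₂ := congrArg Prod.fst h1
    have h3 : (a₁ : ℝ) + q * m₁ = (a₂ : ℝ) + q * m₂ := congrArg Prod.snd h1
    have ha : a₁ = a₂ := by exact_mod_cast h2
    have hqne : (q : ℝ) ≠ 0 := Nat.cast_ne_zero.mpr hq.ne'
    have hm : (m₁ : ℝ) = m₂ := by
      have h5 := h3
      rw [h2] at h5
      have h4 : (q : ℝ) * m₁ = q * m₂ := by linarith
      exact mul_left_cancel₀ hqne h4
    have hm' : m₁ = m₂ := by exact_mod_cast hm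
    simp [ha, hm']
  · rintro ⟨⟨v1, v2⟩, z, w₁, w₂, h1, h2⟩
    refine ⟨(w₂ - w₁, z + q * w₁), ?_⟩
    apply Subtype.ext
    simp only [lqMap]
    refine Prod.ext ?_ ?_
    · simp only at h1 ⊢; rw [h1]; push_cast; ring
    · simp only at h2 ⊢; rw [h2]; push_cast; ring

private lemma fsLq_eq {q : ℕ} (hq : 0 < q) (r : ℝ) :
    fsLq gauss r q
      = ∑' p : ℤ × ℤ, gauss ((p.2 : ℝ) / r) * gauss (((p.2 : ℝ) + q * p.1) / r) := by
  rw [fsLq, ← Equiv.tsum_eq (Equiv.ofBijective (lqMap q) (lqMap_bijective hq))]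
  rfl

private lemma fsLq_bounds {q : ℕ} (hq : 0 < q) {r : ℝ} (hr : 0 < r) :
    0 < fsLq gauss r q ∧
    fsLq gauss r q ≤ Real.sqrt (r ^ 2 / 2)
      * (∑' k : ℤ, rexp (-(π * (r ^ 2 / 2)) * (k : ℝ) ^ 2))
      * ∑' k : ℤ, rexp (-(π * ((q : ℝ) ^ 2 / (2 * r ^ 2))) * (k : ℝ) ^ 2) := by
  have hrne : r ≠ 0 := hr.ne'
  have hπ := Real.pi_pos
  have hc2 : (0 : ℝ) < r ^ 2 / 2 := by positivity
  have hqR : (0 : ℝ) < q := by exact_mod_cast hq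
  have hfe : ∀ p : ℤ × ℤ, gauss ((p.2 : ℝ) / r) * gauss (((p.2 : ℝ) + q * p.1) / r)
      = rexp (-(π * ((q : ℝ) ^ 2 / (2 * r ^ 2))) * (p.1 : ℝ) ^ 2)
        * rexp (-(π / (r ^ 2 / 2)) * ((p.2 : ℝ) + (q : ℝ) * (p.1 : ℝ) / 2) ^ 2) := by
    intro p
    rw [gauss, gauss, ← Real.exp_add, ← Real.exp_add]
    congr 1
    field_simp
    ring
  have hrw : fsLq gauss r q = ∑' p : ℤ × ℤ,
      rexp (-(π * ((q : ℝ) ^ 2 / (2 * r ^ 2))) * (p.1 : ℝ) ^ 2)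
        * rexp (-(π / (r ^ 2 / 2)) * ((p.2 : ℝ) + (q : ℝ) * (p.1 : ℝ) / 2) ^ 2) := by
    rw [fsLq_eq hq r]
    exact tsum_congr hfe
  have hfib : ∀ m : ℤ, Summable fun a : ℤ =>
      rexp (-(π * ((q : ℝ) ^ 2 / (2 * r ^ 2))) * (m : ℝ) ^ 2)
        * rexp (-(π / (r ^ 2 / 2)) * ((a : ℝ) + (q : ℝ) * (m : ℝ) / 2) ^ 2) :=
    fun m => (summable_exp_shift (by positivity) _).mul_left _
  set D := ∑' k : ℤ, rexp (-(π * (r ^ 2 / 2)) * (k : ℝ) ^ 2) with hD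
  have hDnn : 0 ≤ D := tsum_nonneg fun k => (exp_pos _).le
  have hinner : ∀ m : ℤ, (∑' a : ℤ, rexp (-(π * ((q : ℝ) ^ 2 / (2 * r ^ 2))) * (m : ℝ) ^ 2)
      * rexp (-(π / (r ^ 2 / 2)) * ((a : ℝ) + (q : ℝ) * (m : ℝ) / 2) ^ 2))
      ≤ rexp (-(π * ((q : ℝ) ^ 2 / (2 * r ^ 2))) * (m : ℝ) ^ 2) * (Real.sqrt (r ^ 2 / 2) * D) := by
    intro m
    rw [tsum_mul_left]
    exact mul_le_mul_of_nonneg_left (shifted_le hc2 _) (exp_pos _).le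
  have hsum2 : Summable fun m : ℤ => rexp (-(π * ((q : ℝ) ^ 2 / (2 * r ^ 2))) * (m : ℝ) ^ 2)
      * (Real.sqrt (r ^ 2 / 2) * D) := (summable_exp_int (by positivity)).mul_right _
  have hgsum : Summable fun m : ℤ => ∑' a : ℤ,
      rexp (-(π * ((q : ℝ) ^ 2 / (2 * r ^ 2))) * (m : ℝ) ^ 2)
        * rexp (-(π / (r ^ 2 / 2)) * ((a : ℝ) + (q : ℝ) * (m : ℝ) / 2) ^ 2) :=
    Summable.of_nonneg_of_le (fun m => tsum_nonneg fun a => by positivity) hinner hsum2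
  have hFsum : Summable (fun p : ℤ × ℤ =>
      rexp (-(π * ((q : ℝ) ^ 2 / (2 * r ^ 2))) * (p.1 : ℝ) ^ 2)
        * rexp (-(π / (r ^ 2 / 2)) * ((p.2 : ℝ) + (q : ℝ) * (p.1 : ℝ) / 2) ^ 2)) :=
    (summable_prod_of_nonneg (fun p => by positivity)).mpr ⟨hfib, hgsum⟩
  constructor
  · rw [hrw]
    exact Summable.tsum_pos hFsum (fun p => by positivity) (0, 0) (by positivity)
  · rw [hrw, Summable.tsum_prod' hFsum hfib]
    calc (∑' m : ℤ, ∑' a : ℤ, rexp (-(π * ((q : ℝ) ^ 2 / (2 * r ^ 2))) * (m : ℝ) ^ 2)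
          * rexp (-(π / (r ^ 2 / 2)) * ((a : ℝ) + (q : ℝ) * (m : ℝ) / 2) ^ 2))
        ≤ ∑' m : ℤ, rexp (-(π * ((q : ℝ) ^ 2 / (2 * r ^ 2))) * (m : ℝ) ^ 2)
          * (Real.sqrt (r ^ 2 / 2) * D) := Summable.tsum_le_tsum hinner hgsum hsum2
      _ = (∑' m : ℤ, rexp (-(π * ((q : ℝ) ^ 2 / (2 * r ^ 2))) * (m : ℝ) ^ 2))
          * (Real.sqrt (r ^ 2 / 2) * D) := tsum_mul_right
      _ = Real.sqrt (r ^ 2 / 2) * D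
          * ∑' k : ℤ, rexp (-(π * ((q : ℝ) ^ 2 / (2 * r ^ 2))) * (k : ℝ) ^ 2) := by ring

/-- Average-case Gaussian rate bound: for prime `q` and `r₀ < r < q/r₀`, for both the
continuous Gaussian channel (density `f_r(x)/r` on ℝ) and the discrete one (mass
`f_r(x)/f_r(ℤ)` on ℤ), with `μ_{r,r} = E_{e←D_r}[f_r(e)]`, we have
`A^(2)_{q,r}(r)² = μ_{r,r}²/f_r(L_q) > (1/(r√2))·E_q(r)²`. -/
theorem avg_case_gaussian_rate (q : ℕ) (hq : Nat.Prime q) (r : ℝ)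
    (hr₁ : r₀ < r) (hr₂ : r < q / r₀) :
    (∫ e : ℝ, gauss (e / r) / r * gauss (e / r)) ^ 2 / fsLq gauss r q >
        1 / (r * Real.sqrt 2) * Egq q r ^ 2 ∧
      ((∑' k : ℤ, gauss ((k : ℝ) / r) * gauss ((k : ℝ) / r)) /
            (∑' k : ℤ, gauss ((k : ℝ) / r))) ^ 2 / fsLq gauss r q >
        1 / (r * Real.sqrt 2) * Egq q r ^ 2 := by
  have hπ := Real.pi_pos
  have hr0p : 0 < r₀ := r0_pos
  have hr : 0 < r := hr0p.trans hr₁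
  have hrne : r ≠ 0 := hr.ne'
  have hq0 : 0 < q := hq.pos
  have hqR : (0 : ℝ) < q := by exact_mod_cast hq0
  have hqr : r₀ < (q : ℝ) / r := by
    rw [lt_div_iff₀ hr]
    have h := (lt_div_iff₀ hr0p).mp hr₂
    nlinarith
  set t := rexp (-(π * r ^ 2) / 2) with htdef
  set u := rexp (-(π * ((q : ℝ) / r) ^ 2) / 2) with hudef
  have ht2 : t < 1 / 2 := exp_lt_half hr₁
  have hu2 : u < 1 / 2 := exp_lt_half hqr
  have ht0 : 0 < t := exp_pos _
  have hu0 : 0 < u := exp_pos _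
  have ha : 0 < 1 - 2 * t := by linarith
  have hb : 0 < 1 - 2 * u := by linarith
  have hc2 : (0 : ℝ) < r ^ 2 / 2 := by positivity
  set D := ∑' k : ℤ, rexp (-(π * (r ^ 2 / 2)) * (k : ℝ) ^ 2) with hDdef
  set D' := ∑' k : ℤ, rexp (-(π * ((q : ℝ) ^ 2 / (2 * r ^ 2))) * (k : ℝ) ^ 2) with hD'def
  set D₁ := ∑' k : ℤ, rexp (-(π * r ^ 2) * (k : ℝ) ^ 2) with hD₁def
  have heqt : rexp (-(π * (r ^ 2 / 2))) = t := by rw [htdef]; congr 1; ring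
  have hequ : rexp (-(π * ((q : ℝ) ^ 2 / (2 * r ^ 2)))) = u := by
    rw [hudef]; congr 1; field_simp
  have hD_lt : D < 1 / (1 - 2 * t) := by
    have h := theta_lt (s := π * (r ^ 2 / 2)) (by positivity) (by rw [heqt]; exact ht2)
    rwa [heqt] at h
  have hD'_lt : D' < 1 / (1 - 2 * u) := by
    have h := theta_lt (s := π * ((q : ℝ) ^ 2 / (2 * r ^ 2))) (by positivity)
      (by rw [hequ]; exact hu2)
    rwa [hequ] at h
  have hD_pos : 0 < D :=
    Summable.tsum_pos (summable_exp_int (by positivity)) (fun k => (exp_pos _).le) 0 (exp_pos _)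
  have hD'_pos : 0 < D' :=
    Summable.tsum_pos (summable_exp_int (by positivity)) (fun k => (exp_pos _).le) 0 (exp_pos _)
  have hD₁_pos : 0 < D₁ :=
    Summable.tsum_pos (summable_exp_int (by positivity)) (fun k => (exp_pos _).le) 0 (exp_pos _)
  have hs2 : (0 : ℝ) < Real.sqrt 2 := Real.sqrt_pos.mpr (by norm_num)
  have h22 : Real.sqrt 2 * Real.sqrt 2 = 2 := Real.mul_self_sqrt (by norm_num)
  have hsqr : Real.sqrt (r ^ 2 / 2) = r / Real.sqrt 2 := by
    rw [show r ^ 2 / 2 = (r / Real.sqrt 2) ^ 2 by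
      rw [div_pow, Real.sq_sqrt (by norm_num : (0:ℝ) ≤ 2)],
      Real.sqrt_sq (by positivity)]
  obtain ⟨hFpos, hFle⟩ := fsLq_bounds hq0 hr
  have hM : fsLq gauss r q < (r / Real.sqrt 2) * (1 / (1 - 2 * t)) * (1 / (1 - 2 * u)) := by
    have h1 : fsLq gauss r q ≤ (r / Real.sqrt 2) * D * D' := by rw [← hsqr]; exact hFle
    have hrs : 0 < r / Real.sqrt 2 := by positivity
    have k1 : (r / Real.sqrt 2) * D * D' < (r / Real.sqrt 2) * (1 / (1 - 2 * t)) * D' :=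
      mul_lt_mul_of_pos_right (mul_lt_mul_of_pos_left hD_lt hrs) hD'_pos
    have k2 : (r / Real.sqrt 2) * (1 / (1 - 2 * t)) * D'
        < (r / Real.sqrt 2) * (1 / (1 - 2 * t)) * (1 / (1 - 2 * u)) :=
      mul_lt_mul_of_pos_left hD'_lt (by positivity)
    linarith
  have hmain : ∀ X : ℝ, 1 / 2 ≤ X ^ 2 →
      1 / (r * Real.sqrt 2) * Egq q r ^ 2 < X ^ 2 / fsLq gauss r q := by
    intro X hX
    have hEgu : Eg ((q : ℝ) / r) = 1 - 2 * u := by rw [Eg]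
    have hEgt : Eg r = 1 - 2 * t := by rw [Eg]
    have hEgq : Egq q r ^ 2 = (1 - 2 * u) * (1 - 2 * t) := by
      rw [Egq, hEgu, hEgt, Real.sq_sqrt (mul_nonneg hb.le ha.le)]
    rw [hEgq]
    have step1 : 1 / (r * Real.sqrt 2) * ((1 - 2 * u) * (1 - 2 * t))
        = (1 / 2) / ((r / Real.sqrt 2) * (1 / (1 - 2 * t)) * (1 / (1 - 2 * u))) := by
      rw [eq_div_iff (by positivity)]
      field_simp
      linear_combination (-1 : ℝ) * h22
    rw [step1]
    calc (1 / 2) / ((r / Real.sqrt 2) * (1 / (1 - 2 * t)) * (1 / (1 - 2 * u)))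
        < (1 / 2) / fsLq gauss r q := div_lt_div_of_pos_left (by norm_num) hFpos hM
      _ ≤ X ^ 2 / fsLq gauss r q := (div_le_div_iff_of_pos_right hFpos).mpr hX
  constructor
  · apply hmain
    have hint : (∫ e : ℝ, gauss (e / r) / r * gauss (e / r)) = 1 / Real.sqrt 2 := by
      have h1 : ∀ e : ℝ, gauss (e / r) / r * gauss (e / r)
          = (1 / r) * rexp (-(2 * π / r ^ 2) * e ^ 2) := by
        intro e
        calc gauss (e / r) / r * gauss (e / r)
            = (1 / r) * (rexp (-(π * (e / r) ^ 2)) * rexp (-(π * (e / r) ^ 2))) := by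
              rw [gauss]; ring
          _ = (1 / r) * rexp (-(2 * π / r ^ 2) * e ^ 2) := by
              rw [← Real.exp_add]; congr 1; field_simp; ring
      simp only [h1]
      rw [MeasureTheory.integral_const_mul, integral_gaussian,
        show π / (2 * π / r ^ 2) = r ^ 2 / 2 by field_simp, hsqr]
      field_simp
    have hhalf : (1 / Real.sqrt 2) ^ 2 = 1 / 2 := by
      rw [div_pow, one_pow, Real.sq_sqrt (by norm_num : (0:ℝ) ≤ 2)]
    exact le_of_eq (by rw [hint, hhalf])
  · apply hmain
    have hBeq : (∑' k : ℤ, gauss ((k : ℝ) / r) * gauss ((k : ℝ) / r))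
        = Real.sqrt (r ^ 2 / 2) * D := by
      rw [← poisson' hc2]
      refine tsum_congr fun k => ?_
      rw [gauss, ← Real.exp_add]
      congr 1
      field_simp
      ring
    have hB1eq : (∑' k : ℤ, gauss ((k : ℝ) / r)) = r * D₁ := by
      have h := poisson' (c := r ^ 2) (by positivity)
      rw [Real.sqrt_sq hr.le] at h
      rw [← h]
      refine tsum_congr fun k => ?_
      rw [gauss]
      congr 1
      field_simp
    have hD₁_le : D₁ ≤ D := by
      refine Summable.tsum_le_tsum (fun k => Real.exp_le_exp.mpr ?_)
        (summable_exp_int (by positivity)) (summable_exp_int (by positivity))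
      nlinarith [mul_nonneg (mul_nonneg hπ.le (sq_nonneg r)) (sq_nonneg ((k : ℝ)))]
    have hXd : 1 / Real.sqrt 2
        ≤ (∑' k : ℤ, gauss ((k : ℝ) / r) * gauss ((k : ℝ) / r)) / ∑' k : ℤ, gauss ((k : ℝ) / r) := by
      rw [hBeq, hB1eq, hsqr, le_div_iff₀ (mul_pos hr hD₁_pos)]
      calc 1 / Real.sqrt 2 * (r * D₁) = (r / Real.sqrt 2) * D₁ := by ring
        _ ≤ (r / Real.sqrt 2) * D := mul_le_mul_of_nonneg_left hD₁_le (div_nonneg hr.le (Real.sqrt_nonneg 2))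
    calc (1:ℝ) / 2 = (1 / Real.sqrt 2) ^ 2 := by
          rw [div_pow, one_pow, Real.sq_sqrt (by norm_num : (0:ℝ) ≤ 2)]
      _ ≤ _ := pow_le_pow_left₀ (by positivity) hXd 2

end
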